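/- If N is a positive integer and c, d are integers with gcd(2c, N) = 1, then the absolute value of the Gauss sum G(c,d;N) = \sum_{t mod N} e^{2\pi i (c t^2 + d t)/N} equals \sqrt{N}. -/

import Mathlib

open Finset AddChar

private theorem gauss_sq' {N : ℕ} [NeZero N] (c d : ZMod N) (hc : IsUnit (2 * c)) :
    (∑ x : ZMod N, ZMod.stdAddChar (c * x ^ 2 + d * x)) *
      (starRingEnd ℂ) (∑ x : ZMod N, ZMod.stdAddChar (c * x ^ 2 + d * x)) = (N : ℂ) := by
  classical
  set ψ : AddChar (ZMod N) ℂ := ZMod.stdAddChar with hψ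
  have conjψ : ∀ a : ZMod N, (starRingEnd ℂ) (ψ a) = ψ (-a) := by
    intro a
    rw [hψ, ZMod.stdAddChar_apply, ZMod.stdAddChar_apply, ← Circle.coe_inv_eq_conj,
      ← AddChar.map_neg_eq_inv]
  rw [map_sum, Finset.sum_mul_sum]
  have step : ∀ x : ZMod N, (∑ y : ZMod N,
      ψ (c * x ^ 2 + d * x) * (starRingEnd ℂ) (ψ (c * y ^ 2 + d * y))) =
      ∑ u : ZMod N, ψ (-(c * u ^ 2 + d * u)) * ψ (x * (-(2 * c * u))) := by
    intro x
    refine (Fintype.sum_equiv (Equiv.addRight x)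
      (fun u => ψ (-(c * u ^ 2 + d * u)) * ψ (x * (-(2 * c * u)))) _ ?_).symm
    intro u
    simp only [Equiv.coe_addRight]
    rw [conjψ, ← AddChar.map_add_eq_mul, ← AddChar.map_add_eq_mul]
    congr 1
    ring
  rw [Finset.sum_congr rfl fun x _ => step x, Finset.sum_comm]
  have hsum : ∀ u : ZMod N, (∑ x : ZMod N, ψ (-(c * u ^ 2 + d * u)) * ψ (x * (-(2 * c * u)))) =
      ψ (-(c * u ^ 2 + d * u)) * (if u = 0 then (N : ℂ) else 0) := by
    intro u
    rw [← Finset.mul_sum, AddChar.sum_mulShift _ (ZMod.isPrimitive_stdAddChar N)]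
    have hiff : -(2 * c * u) = 0 ↔ u = 0 := by
      rw [neg_eq_zero, hc.mul_right_eq_zero]
    simp [hiff, ZMod.card, apply_ite (Nat.cast : ℕ → ℂ)]
  rw [Finset.sum_congr rfl fun u _ => hsum u]
  simp_rw [mul_ite, mul_zero]
  rw [Finset.sum_ite_eq' Finset.univ (0 : ZMod N)]
  simp

/-- If `N` is a positive integer and `c, d` are integers with
`gcd(2c, N) = 1`, then `|G(c,d;N)| = √N`, where
`G(c,d;N) = ∑_{t mod N} exp(2πi (c t² + d t)/N)`. -/
theorem abs_gauss_sum_of_coprime (N : ℕ) (hN : 0 < N) (c d : ℤ)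
    (h : Int.gcd (2 * c) (N : ℤ) = 1) :
    ‖∑ t ∈ Finset.range N,
      Complex.exp (2 * Real.pi * Complex.I *
        ((c : ℂ) * (t : ℂ) ^ 2 + (d : ℂ) * (t : ℂ)) / (N : ℂ))‖ =
    Real.sqrt N := by
  haveI : NeZero N := ⟨hN.ne'⟩
  set ψ : AddChar (ZMod N) ℂ := ZMod.stdAddChar with hψ
  have key : ∀ t : ℕ, Complex.exp (2 * Real.pi * Complex.I *
        ((c : ℂ) * (t : ℂ) ^ 2 + (d : ℂ) * (t : ℂ)) / (N : ℂ)) =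
      ψ ((c : ZMod N) * (t : ZMod N) ^ 2 + (d : ZMod N) * (t : ZMod N)) := by
    intro t
    have hcast : ((c * t ^ 2 + d * t : ℤ) : ZMod N) =
        (c : ZMod N) * (t : ZMod N) ^ 2 + (d : ZMod N) * (t : ZMod N) := by
      push_cast; ring
    rw [hψ, ← hcast, ZMod.stdAddChar_coe]
    push_cast
    ring_nf
  have hS : (∑ t ∈ Finset.range N, Complex.exp (2 * Real.pi * Complex.I *
        ((c : ℂ) * (t : ℂ) ^ 2 + (d : ℂ) * (t : ℂ)) / (N : ℂ))) =
      ∑ x : ZMod N, ψ ((c : ZMod N) * x ^ 2 + (d : ZMod N) * x) := by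
    simp_rw [key]
    exact Finset.sum_nbij' (fun t : ℕ => (t : ZMod N)) (fun x : ZMod N => x.val)
      (fun a _ => Finset.mem_univ _)
      (fun x _ => Finset.mem_range.mpr (ZMod.val_lt x))
      (fun a ha => ZMod.val_natCast_of_lt (Finset.mem_range.mp ha))
      (fun x _ => ZMod.natCast_rightInverse x)
      (fun a _ => rfl)
  have hc : IsUnit ((2 : ZMod N) * (c : ZMod N)) := by
    have hcop : IsCoprime (2 * c) (N : ℤ) := Int.isCoprime_iff_gcd_eq_one.mpr h
    have h2 := hcop.map (Int.castRingHom (ZMod N))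
    rw [map_natCast, ZMod.natCast_self, isCoprime_zero_right, eq_intCast] at h2
    have h3 : ((2 * c : ℤ) : ZMod N) = (2 : ZMod N) * (c : ZMod N) := by push_cast; ring
    rwa [h3] at h2
  have hmain := gauss_sq' (N := N) (c : ZMod N) (d : ZMod N) hc
  rw [hS]
  set S := ∑ x : ZMod N, ψ ((c : ZMod N) * x ^ 2 + (d : ZMod N) * x) with hSdef
  have hnormSq : Complex.normSq S = N := by
    have h4 := hmain
    rw [Complex.mul_conj] at h4
    exact_mod_cast h4
  rw [Complex.norm_def, hnormSq]
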